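/- Let α ∈ ℕ₀^N with α_i > α_{i+1}. Define leg-length L(α;i,j) = #{l : l > i, j ≤ α_l ≤ α_i} + #{l : l < i, j ≤ α_l + 1 ≤ α_i} and rank r(α,i) = #{j : α_j > α_i} + #{j ≤ i : α_j = α_i}. Then r(α,i+1) − r(α,i) = 1 + L(α; i, α_{i+1}+1). -/
import Mathlib


/-- The rank function: `r(α,i) = #{j : α_j > α_i} + #{j ≤ i : α_j = α_i}`,
with indices running over `{1,…,N}`. -/
def rankF (N : ℕ) (α : ℕ → ℕ) (i : ℕ) : ℕ :=
  ((Finset.Icc 1 N).filter (fun j => α i < α j)).card +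
  ((Finset.Icc 1 i).filter (fun j => α j = α i)).card

/-- The leg-length `L(α;i,j) = #{l > i : j ≤ α_l ≤ α_i} + #{l < i : j ≤ α_l + 1 ≤ α_i}`. -/
def legF (N : ℕ) (α : ℕ → ℕ) (i j : ℕ) : ℕ :=
  ((Finset.Icc 1 N).filter (fun l => i < l ∧ j ≤ α l ∧ α l ≤ α i)).card +
  ((Finset.Icc 1 N).filter (fun l => l < i ∧ j ≤ α l + 1 ∧ α l + 1 ≤ α i)).card

/-- if `α_i > α_{i+1}` then `r(α,i+1) − r(α,i) = 1 + L(α;i,α_{i+1}+1)`. -/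
theorem rank_diff_eq_one_add_leg
    (N i : ℕ) (α : ℕ → ℕ) (h1 : 1 ≤ i) (h2 : i + 1 ≤ N) (hgt : α (i + 1) < α i) :
    rankF N α (i + 1) = rankF N α i + 1 + legF N α i (α (i + 1) + 1) := by
  classical
  have hiN : i ≤ N := by omega
  have key : ∀ (k : ℕ) (p : ℕ → Prop) [DecidablePred p], k ≤ N →
      ((Finset.Icc 1 k).filter p).card
        = ((Finset.Icc 1 N).filter (fun j => p j ∧ j ≤ k)).card := by
    intro k p _ hk
    congr 1
    ext j
    simp only [Finset.mem_filter, Finset.mem_Icc]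
    constructor
    · rintro ⟨⟨ha, hb⟩, hp⟩; exact ⟨⟨ha, le_trans hb hk⟩, hp, hb⟩
    · rintro ⟨⟨ha, _⟩, hp, hb⟩; exact ⟨⟨ha, hb⟩, hp⟩
  unfold rankF legF
  rw [key (i+1) _ h2, key i _ hiN]
  rw [Finset.card_filter, Finset.card_filter, Finset.card_filter, Finset.card_filter,
      Finset.card_filter, Finset.card_filter]
  have hone : (∑ j ∈ Finset.Icc 1 N, if j = i + 1 then 1 else 0) = 1 := by
    rw [Finset.sum_ite_eq' (Finset.Icc 1 N) (i+1) (fun _ => 1)]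
    simp [Finset.mem_Icc]
    omega
  have hmain :
      (∑ j ∈ Finset.Icc 1 N, ((if α (i+1) < α j then 1 else 0)
          + (if α j = α (i+1) ∧ j ≤ i + 1 then 1 else 0)))
      = ∑ j ∈ Finset.Icc 1 N, ((if α i < α j then 1 else 0)
          + (if α j = α i ∧ j ≤ i then 1 else 0)
          + (if i < j ∧ α (i+1) + 1 ≤ α j ∧ α j ≤ α i then 1 else 0)
          + (if j < i ∧ α (i+1) + 1 ≤ α j + 1 ∧ α j + 1 ≤ α i then 1 else 0)
          + (if j = i + 1 then 1 else 0)) := by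
    apply Finset.sum_congr rfl
    intro j hj
    rcases eq_or_ne j (i+1) with rfl | hne1
    · split_ifs <;> omega
    · rcases eq_or_ne j i with rfl | hne2
      · split_ifs <;> omega
      · split_ifs <;> omega
  simp only [Finset.sum_add_distrib, hone] at hmain
  omega
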